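/- Let X be a pre-Riesz space and let P : X → X be a linear projection (P ∘ P = P). Then P is a band projection if and only if both the range PX and the kernel ker P are projection bands in X. -/

import Mathlib

open Pointwise

/-- The class `OrderedSMul` as it stood in Mathlib (December 2024); it has since been removed. -/
class OrderedSMul (R M : Type*) [Semiring R] [PartialOrder R] [AddCommMonoid M] [PartialOrder M]
    [SMulWithZero R M] : Prop where
  protected smul_lt_smul_of_pos : ∀ {a b : M}, ∀ {c : R}, a < b → 0 < c → c • a < c • b
  protected lt_of_smul_lt_smul_of_pos : ∀ {a b : M}, ∀ {c : R}, c • a < c • b → 0 < c → a < b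

variable {X : Type*} [AddCommGroup X] [PartialOrder X] [IsOrderedAddMonoid X] [Module ℝ X] [OrderedSMul ℝ X]

/-- Two elements of an ordered vector space are disjoint if the sets `{x+y, -x-y}` and
`{x-y, y-x}` have the same set of upper bounds. -/
def UDisjoint (x y : X) : Prop :=
  upperBounds ({x + y, -x - y} : Set X) = upperBounds ({x - y, y - x} : Set X)

/-- The disjoint complement `S^⊥` of a set `S`. -/
def dComp (S : Set X) : Set X := {x : X | ∀ s ∈ S, UDisjoint x s}

/-- A band: a set equal to its double disjoint complement. -/
def IsBand (B : Set X) : Prop := B = dComp (dComp B)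

/-- A projection band: a band `B` with `B ∩ B^⊥ = {0}` and `B + B^⊥ = X`. -/
def IsProjBand (B : Set X) : Prop :=
  IsBand B ∧ B ∩ dComp B = {0} ∧ ∀ x : X, ∃ b ∈ B, ∃ c ∈ dComp B, x = b + c

/-- A positive linear operator. -/
def IsPosMap (T : X →ₗ[ℝ] X) : Prop := ∀ x : X, 0 ≤ x → 0 ≤ T x

/-- A band projection: a linear projection whose range is a projection band and whose
kernel is the disjoint complement of the range. -/
def IsBandProj (P : X →ₗ[ℝ] X) : Prop :=
  P ∘ₗ P = P ∧ IsProjBand (Set.range ⇑P) ∧ (LinearMap.ker P : Set X) = dComp (Set.range ⇑P)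

/-- A pre-Riesz space: for every nonempty finite `A ⊆ X` and every `x`, if the upper bounds
of `x + A` are contained in the upper bounds of `A`, then `x ≥ 0`. -/
def IsPreRiesz (X : Type*) [AddCommGroup X] [PartialOrder X] [IsOrderedAddMonoid X] [Module ℝ X]
    [OrderedSMul ℝ X] : Prop :=
  ∀ (A : Set X) (x : X), A.Finite → A.Nonempty →
    upperBounds ((x + ·) '' A) ⊆ upperBounds A → 0 ≤ x

/-! ### Auxiliary lemmas -/

private lemma osmul_le {a b : X} {c : ℝ} (h : a ≤ b) (hc : 0 ≤ c) : c • a ≤ c • b := by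
  rcases hc.lt_or_eq with hc | hc
  · rcases h.lt_or_eq with h | h
    · exact (OrderedSMul.smul_lt_smul_of_pos h hc).le
    · rw [h]
  · rw [← hc, zero_smul, zero_smul]

private lemma tweak {A B C D : X} (h : C ≤ D) (e : A + D = B + C) : A ≤ B := by
  have h1 : A + C ≤ A + D := add_le_add_right h A
  rw [e] at h1
  exact le_of_add_le_add_right h1

private lemma addle {a b c d : X} (h1 : a ≤ b) (h2 : c ≤ d) : a + c ≤ b + d := add_le_add h1 h2

private lemma bp_half {a t : X} (h : a + a ≤ t + t) : a ≤ t := by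
  have h2 : (2:ℝ) • a ≤ (2:ℝ) • t := by rw [two_smul, two_smul]; exact h
  have h3 := osmul_le h2 (by norm_num : (0:ℝ) ≤ 2⁻¹)
  rwa [smul_smul, smul_smul, (by norm_num : (2⁻¹:ℝ) * 2 = 1), one_smul, one_smul] at h3

private lemma mem_ub_pair {a b u : X} : u ∈ upperBounds ({a, b} : Set X) ↔ a ≤ u ∧ b ≤ u := by
  simp [upperBounds]

lemma ud_iff {x y : X} : UDisjoint x y ↔
    ∀ u : X, (x + y ≤ u ∧ -x - y ≤ u) ↔ (x - y ≤ u ∧ y - x ≤ u) := by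
  unfold UDisjoint
  rw [Set.ext_iff]
  exact forall_congr' fun u => by rw [mem_ub_pair, mem_ub_pair]

lemma ud_symm {x y : X} (h : UDisjoint x y) : UDisjoint y x := by
  rw [ud_iff] at h ⊢
  intro u
  constructor
  · rintro ⟨h1, h2⟩
    obtain ⟨g1, g2⟩ := (h u).1 ⟨tweak h1 (by abel), tweak h2 (by abel)⟩
    exact ⟨tweak g2 (by abel), tweak g1 (by abel)⟩
  · rintro ⟨h1, h2⟩
    obtain ⟨g1, g2⟩ := (h u).2 ⟨tweak h2 (by abel), tweak h1 (by abel)⟩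
    exact ⟨tweak g1 (by abel), tweak g2 (by abel)⟩

lemma ud_neg_left {x y : X} (h : UDisjoint x y) : UDisjoint (-x) y := by
  rw [ud_iff] at h ⊢
  intro u
  constructor
  · rintro ⟨h1, h2⟩
    obtain ⟨g1, g2⟩ := (h u).2 ⟨tweak h2 (by abel), tweak h1 (by abel)⟩
    exact ⟨tweak g2 (by abel), tweak g1 (by abel)⟩
  · rintro ⟨h1, h2⟩
    obtain ⟨g1, g2⟩ := (h u).1 ⟨tweak h2 (by abel), tweak h1 (by abel)⟩
    exact ⟨tweak g2 (by abel), tweak g1 (by abel)⟩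

lemma ud_neg_right {x y : X} (h : UDisjoint x y) : UDisjoint x (-y) :=
  ud_symm (ud_neg_left (ud_symm h))

lemma ud_neg_both {x y : X} (h : UDisjoint x y) : UDisjoint (-x) (-y) :=
  ud_neg_left (ud_neg_right h)

lemma ud_zero (y : X) : UDisjoint (0:X) y := by
  rw [ud_iff]
  intro u
  constructor
  · rintro ⟨h1, h2⟩
    exact ⟨tweak h2 (by abel), tweak h1 (by abel)⟩
  · rintro ⟨h1, h2⟩
    exact ⟨tweak h2 (by abel), tweak h1 (by abel)⟩

lemma ud_self_eq_zero {x : X} (h : UDisjoint x x) : x = 0 := by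
  rw [ud_iff] at h
  have h0 := (h 0).2 ⟨by simp, by simp⟩
  have hxx : x + x = 0 := le_antisymm h0.1 (tweak h0.2 (by abel))
  have h2 : (2:ℝ) • x = (0:X) := by rw [two_smul]; exact hxx
  have h3 := congrArg (fun v : X => (2⁻¹:ℝ) • v) h2
  simpa [smul_smul, (by norm_num : (2⁻¹:ℝ) * 2 = 1)] using h3

lemma ud_double {x z : X} (h : UDisjoint x z) : UDisjoint (x + x) (z + z) := by
  have conv : ∀ a u : X, a + a ≤ u ↔ a ≤ (2⁻¹:ℝ) • u := by
    intro a u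
    constructor
    · intro hh
      have h2 : (2:ℝ) • a ≤ u := by rw [two_smul]; exact hh
      have h3 := osmul_le h2 (by norm_num : (0:ℝ) ≤ 2⁻¹)
      rwa [smul_smul, (by norm_num : (2⁻¹:ℝ) * 2 = 1), one_smul] at h3
    · intro hh
      have h3 := osmul_le hh (by norm_num : (0:ℝ) ≤ 2)
      rw [smul_smul, (by norm_num : (2:ℝ) * 2⁻¹ = 1), one_smul] at h3
      rw [two_smul] at h3
      exact h3
  rw [ud_iff] at h ⊢
  intro u
  have key := h ((2⁻¹:ℝ) • u)
  constructor
  · rintro ⟨h1, h2⟩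
    have p1 : (x + z) + (x + z) ≤ u := tweak h1 (by abel)
    have p2 : (-x - z) + (-x - z) ≤ u := tweak h2 (by abel)
    obtain ⟨g1, g2⟩ := key.1 ⟨(conv _ _).1 p1, (conv _ _).1 p2⟩
    have q1 : (x - z) + (x - z) ≤ u := (conv _ _).2 g1
    have q2 : (z - x) + (z - x) ≤ u := (conv _ _).2 g2
    exact ⟨tweak q1 (by abel), tweak q2 (by abel)⟩
  · rintro ⟨h1, h2⟩
    have p1 : (x - z) + (x - z) ≤ u := tweak h1 (by abel)
    have p2 : (z - x) + (z - x) ≤ u := tweak h2 (by abel)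
    obtain ⟨g1, g2⟩ := key.2 ⟨(conv _ _).1 p1, (conv _ _).1 p2⟩
    have q1 : (x + z) + (x + z) ≤ u := (conv _ _).2 g1
    have q2 : (-x - z) + (-x - z) ≤ u := (conv _ _).2 g2
    exact ⟨tweak q1 (by abel), tweak q2 (by abel)⟩

private lemma bp_key (hX : IsPreRiesz X) {x y z s : X} (hx : UDisjoint x z) (hy : UDisjoint y z)
    (H1 : z ≤ s) (H2 : -x - y ≤ s) : 0 ≤ s := by
  rw [ud_iff] at hx hy
  apply hX {x - z, z - x, y - z, z - y} s
    ((((Set.finite_singleton (z - y)).insert (y - z)).insert (z - x)).insert (x - z))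
    ⟨x - z, by simp⟩
  intro t ht
  have P1 : s + (x - z) ≤ t := ht (Set.mem_image_of_mem _ (by simp))
  have P2 : s + (z - x) ≤ t := ht (Set.mem_image_of_mem _ (by simp))
  have P3 : s + (y - z) ≤ t := ht (Set.mem_image_of_mem _ (by simp))
  have P4 : s + (z - y) ≤ t := ht (Set.mem_image_of_mem _ (by simp))
  have a1 : x ≤ t := tweak (addle P1 H1) (by abel)
  have a2 : -y - z ≤ t := tweak (addle P1 H2) (by abel)
  have a3 : z + z - x ≤ t := tweak (addle P2 H1) (by abel)
  have a5 : y ≤ t := tweak (addle P3 H1) (by abel)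
  have a6 : -x - z ≤ t := tweak (addle P3 H2) (by abel)
  have b1 : z ≤ t := bp_half (show z + z ≤ t + t from tweak (addle a1 a3) (by abel))
  have hv2 := (hx (t + t - x - z)).2
    ⟨tweak (addle a1 a1) (by abel), tweak (addle b1 b1) (by abel)⟩
  have b2 : (0:X) ≤ t := bp_half (show (0:X) + 0 ≤ t + t from tweak hv2.2 (by abel))
  have hv3 := (hy (t + t + y + z)).1
    ⟨tweak (addle b2 b2) (by abel), tweak (addle a2 a2) (by abel)⟩
  have b3' : -z ≤ t := bp_half (show -z + -z ≤ t + t from tweak hv3.1 (by abel))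
  have b3 : -y ≤ t := bp_half (show -y + -y ≤ t + t from tweak hv3.2 (by abel))
  have hv4 := (hx (t + t + x + z)).1
    ⟨tweak (addle b2 b2) (by abel), tweak (addle a6 a6) (by abel)⟩
  have b4 : -x ≤ t := bp_half (show -x + -x ≤ t + t from tweak hv4.2 (by abel))
  have hg1 := (hx (t + t - x + z)).1
    ⟨tweak (addle a1 a1) (by abel), tweak (addle b3' b3') (by abel)⟩
  have g1 : x - z ≤ t := bp_half (show (x - z) + (x - z) ≤ t + t from tweak hg1.1 (by abel))
  have hg2 := (hx (t + t + x - z)).1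
    ⟨tweak (addle b1 b1) (by abel), tweak (addle b4 b4) (by abel)⟩
  have g2 : z - x ≤ t := bp_half (show (z - x) + (z - x) ≤ t + t from tweak hg2.2 (by abel))
  have hg3 := (hy (t + t - y + z)).1
    ⟨tweak (addle a5 a5) (by abel), tweak (addle b3' b3') (by abel)⟩
  have g3 : y - z ≤ t := bp_half (show (y - z) + (y - z) ≤ t + t from tweak hg3.1 (by abel))
  have hg4 := (hy (t + t + y - z)).1
    ⟨tweak (addle b1 b1) (by abel), tweak (addle b3 b3) (by abel)⟩
  have g4 : z - y ≤ t := bp_half (show (z - y) + (z - y) ≤ t + t from tweak hg4.2 (by abel))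
  intro a ha
  simp only [Set.mem_insert_iff, Set.mem_singleton_iff] at ha
  rcases ha with rfl | rfl | rfl | rfl
  exacts [g1, g2, g3, g4]

lemma ud_add (hX : IsPreRiesz X) {x y z : X} (hxz : UDisjoint x z) (hyz : UDisjoint y z) :
    UDisjoint (x + y) z := by
  have aux : ∀ a b c : X, UDisjoint a c → UDisjoint b c → ∀ u : X,
      (a + b) + c ≤ u → -(a + b) - c ≤ u → ((a + b) - c ≤ u ∧ c - (a + b) ≤ u) := by
    intro a b c ha hb u F1 F2
    constructor
    · have w1 : c + c ≤ u - a - b + c := tweak F1 (by abel)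
      have w2 : -(a + a) - (b + b) ≤ u - a - b + c := tweak F2 (by abel)
      have h0 := bp_key hX (ud_double ha) (ud_double hb) w1 w2
      exact tweak h0 (by abel)
    · have w1 : -(c + c) ≤ u + a + b - c := tweak F2 (by abel)
      have w2 : -(-(a + a)) - -(b + b) ≤ u + a + b - c := tweak F1 (by abel)
      have h0 := bp_key hX (ud_neg_both (ud_double ha)) (ud_neg_both (ud_double hb)) w1 w2
      exact tweak h0 (by abel)
  rw [ud_iff]
  intro u
  constructor
  · rintro ⟨F1, F2⟩
    exact aux x y z hxz hyz u F1 F2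
  · rintro ⟨G1, G2⟩
    have h := aux x y (-z) (ud_neg_right hxz) (ud_neg_right hyz) u
      (tweak G1 (by abel)) (tweak G2 (by abel))
    exact ⟨tweak h.1 (by abel), tweak h.2 (by abel)⟩

lemma ud_pos (hX : IsPreRiesz X) {x y : X} (h : UDisjoint x y) (hs : 0 ≤ x + y) : 0 ≤ x := by
  rw [ud_iff] at h
  apply hX {y, -y} x ((Set.finite_singleton (-y)).insert y) ⟨y, by simp⟩
  intro t ht
  have P1 : x + y ≤ t := ht (Set.mem_image_of_mem _ (by simp))
  have P2 : x + -y ≤ t := ht (Set.mem_image_of_mem _ (by simp))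
  have t0 : (0:X) ≤ t := le_trans hs P1
  have tneg : -x - y ≤ t := le_trans (tweak (neg_nonpos.mpr hs) (by abel)) t0
  obtain ⟨-, hyx⟩ := (h t).1 ⟨P1, tneg⟩
  have gy : y ≤ t := bp_half (show y + y ≤ t + t from tweak (addle P1 hyx) (by abel))
  have gny : -y ≤ t := bp_half (show -y + -y ≤ t + t from tweak (addle P2 tneg) (by abel))
  intro a ha
  simp only [Set.mem_insert_iff, Set.mem_singleton_iff] at ha
  rcases ha with rfl | rfl
  exacts [gy, gny]

lemma ud_pos' (hX : IsPreRiesz X) {x y : X} (h : UDisjoint x y) (hs : 0 ≤ x + y) : 0 ≤ y :=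
  ud_pos hX (ud_symm h) (by rwa [add_comm])

lemma zero_mem_dComp {S : Set X} : (0:X) ∈ dComp S := fun s _ => ud_zero s

lemma subset_dComp_dComp {S : Set X} : S ⊆ dComp (dComp S) := fun x hx t ht => ud_symm (ht x hx)

lemma dComp_anti {S T : Set X} (h : S ⊆ T) : dComp T ⊆ dComp S := fun x hx s hs => hx s (h hs)

lemma dComp_ddd (S : Set X) : dComp S = dComp (dComp (dComp S)) :=
  Set.Subset.antisymm subset_dComp_dComp (dComp_anti subset_dComp_dComp)

lemma sub_mem_dComp (hX : IsPreRiesz X) {S : Set X} {a b : X}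
    (ha : a ∈ dComp S) (hb : b ∈ dComp S) : a - b ∈ dComp S := by
  intro s hs
  have h := ud_add hX (ha s hs) (ud_neg_left (hb s hs))
  rwa [← sub_eq_add_neg] at h

lemma add_mem_dComp (hX : IsPreRiesz X) {S : Set X} {a b : X}
    (ha : a ∈ dComp S) (hb : b ∈ dComp S) : a + b ∈ dComp S :=
  fun s hs => ud_add hX (ha s hs) (hb s hs)

private lemma bp_directed (hX : IsPreRiesz X) (x y : X) : ∃ z : X, x ≤ z ∧ y ≤ z := by
  by_cases h : (upperBounds ({x, y} : Set X)).Nonempty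
  · obtain ⟨z, hz⟩ := h
    exact ⟨z, hz (by simp), hz (by simp)⟩
  · have key : ∀ w : X, 0 ≤ w := by
      intro w
      apply hX {x, y} w ((Set.finite_singleton y).insert x) ⟨x, by simp⟩
      intro t ht
      exfalso
      apply h
      refine ⟨t - w, fun a ha => ?_⟩
      have h1 : w + a ≤ t := ht (Set.mem_image_of_mem _ ha)
      exact tweak h1 (by abel)
    have hx0 : x = 0 := le_antisymm (neg_nonneg.mp (key (-x))) (key x)
    have hy0 : y = 0 := le_antisymm (neg_nonneg.mp (key (-y))) (key y)
    exact ⟨0, le_of_eq hx0, le_of_eq hy0⟩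

/-- A linear projection is a band projection iff both its range and kernel are
projection bands. -/
theorem stmt_12 (hX : IsPreRiesz X) (P : X →ₗ[ℝ] X) (hP : P ∘ₗ P = P) :
    IsBandProj P ↔
      (IsProjBand (Set.range ⇑P) ∧ IsProjBand (LinearMap.ker P : Set X)) := by
  constructor
  · rintro ⟨hPP, hRange, hker⟩
    refine ⟨hRange, ?_⟩
    rw [hker]
    obtain ⟨hband, hint, hdec⟩ := hRange
    refine ⟨dComp_ddd _, ?_, ?_⟩
    · apply Set.Subset.antisymm
      · rintro z ⟨hz1, hz2⟩
        have hz0 := ud_self_eq_zero (hz2 z hz1)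
        simpa using hz0
      · rintro z hz
        rw [Set.mem_singleton_iff] at hz
        subst hz
        exact ⟨zero_mem_dComp, zero_mem_dComp⟩
    · intro v
      obtain ⟨b, hb, c, hc, hv⟩ := hdec v
      exact ⟨c, hc, b, subset_dComp_dComp hb, by rw [hv, add_comm]⟩
  · rintro ⟨hRange, hKer⟩
    refine ⟨hP, hRange, ?_⟩
    obtain ⟨hBband, hBint, hBdec⟩ := hRange
    obtain ⟨hKband, hKint, hKdec⟩ := hKer
    -- basic facts
    have hBK0 : ∀ v : X, v ∈ Set.range ⇑P → v ∈ (LinearMap.ker P : Set X) → v = 0 := by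
      rintro v ⟨w, rfl⟩ hv
      have h1 : P (P w) = P w := by rw [← LinearMap.comp_apply, hP]
      have h2 : P (P w) = 0 := LinearMap.mem_ker.1 hv
      rw [h1] at h2
      exact h2
    have hBsub : ∀ a b : X, a ∈ Set.range ⇑P → b ∈ Set.range ⇑P → a - b ∈ Set.range ⇑P := by
      rintro a b ⟨wa, rfl⟩ ⟨wb, rfl⟩
      exact ⟨wa - wb, map_sub _ _ _⟩
    have hBadd : ∀ a b : X, a ∈ Set.range ⇑P → b ∈ Set.range ⇑P → a + b ∈ Set.range ⇑P := by
      rintro a b ⟨wa, rfl⟩ ⟨wb, rfl⟩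
      exact ⟨wa + wb, map_add _ _ _⟩
    have hBdisj : ∀ b : X, b ∈ Set.range ⇑P → ∀ c : X, c ∈ dComp (Set.range ⇑P) →
        UDisjoint b c := by
      intro b hb c hc
      rw [hBband] at hb
      exact hb c hc
    have hKdisj : ∀ k : X, k ∈ (LinearMap.ker P : Set X) →
        ∀ m : X, m ∈ dComp (LinearMap.ker P : Set X) → UDisjoint k m := by
      intro k hk m hm
      rw [hKband] at hk
      exact hk m hm
    -- uniqueness of (B, B') decomposition (dComp-part)
    have hBuniq : ∀ b₁ c₁ b₂ c₂ : X, b₁ ∈ Set.range ⇑P → b₂ ∈ Set.range ⇑P →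
        c₁ ∈ dComp (Set.range ⇑P) → c₂ ∈ dComp (Set.range ⇑P) →
        b₁ + c₁ = b₂ + c₂ → c₁ = c₂ := by
      intro b₁ c₁ b₂ c₂ hb₁ hb₂ hc₁ hc₂ heq
      have hd : b₁ - b₂ = c₂ - c₁ := by
        rw [sub_eq_sub_iff_add_eq_add]
        exact heq.trans (add_comm _ _)
      have hmem : b₁ - b₂ ∈ Set.range ⇑P ∩ dComp (Set.range ⇑P) := by
        refine ⟨hBsub _ _ hb₁ hb₂, ?_⟩
        rw [hd]
        exact sub_mem_dComp hX hc₂ hc₁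
      rw [hBint] at hmem
      have h0 : b₁ - b₂ = 0 := Set.mem_singleton_iff.1 hmem
      have h1 : c₂ - c₁ = 0 := by rw [← hd]; exact h0
      have h2 := sub_eq_zero.1 h1
      exact h2.symm
    -- Step A : positive elements of the range lie in K'
    have stepA : ∀ b : X, b ∈ Set.range ⇑P → 0 ≤ b →
        b ∈ dComp (LinearMap.ker P : Set X) := by
      intro b hb hb0
      obtain ⟨k, hk, m, hm, hbe⟩ := hKdec b
      have hkm := hKdisj k hk m hm
      have hsum0 : 0 ≤ k + m := by rw [← hbe]; exact hb0
      have hm0 : 0 ≤ m := ud_pos' hX hkm hsum0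
      obtain ⟨b₂, hb₂, c₂, hc₂, hke⟩ := hBdec k
      obtain ⟨b₃, hb₃, c₃, hc₃, hme⟩ := hBdec m
      have hk0 : 0 ≤ k := ud_pos hX hkm hsum0
      have hc₂0 : 0 ≤ c₂ := ud_pos' hX (hBdisj b₂ hb₂ c₂ hc₂) (by rw [← hke]; exact hk0)
      have hc₃0 : 0 ≤ c₃ := ud_pos' hX (hBdisj b₃ hb₃ c₃ hc₃) (by rw [← hme]; exact hm0)
      have hsum : (b₂ + b₃) + (c₂ + c₃) = b + 0 := by
        rw [hbe, hke, hme]; abel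
      have hcc : c₂ + c₃ = 0 := hBuniq (b₂ + b₃) (c₂ + c₃) b 0
        (hBadd _ _ hb₂ hb₃) hb (add_mem_dComp hX hc₂ hc₃) zero_mem_dComp hsum
      have hc₂z : c₂ = 0 := by
        have hle : c₂ ≤ 0 := by
          have h' : c₂ ≤ c₂ + c₃ := le_add_of_nonneg_right hc₃0
          rwa [hcc] at h'
        exact le_antisymm hle hc₂0
      have hkB : k ∈ Set.range ⇑P := by
        rw [hke, hc₂z, add_zero]; exact hb₂
      have hkz : k = 0 := hBK0 k hkB hk
      rw [hbe, hkz, zero_add]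
      exact hm
    -- Step B : the whole range lies in K'
    have stepB : ∀ b : X, b ∈ Set.range ⇑P → b ∈ dComp (LinearMap.ker P : Set X) := by
      intro b hb
      obtain ⟨u, hub, hu0⟩ := bp_directed hX b 0
      obtain ⟨b₄, hb₄, c₄, hc₄, hue⟩ := hBdec u
      have hb₄0 : 0 ≤ b₄ := ud_pos hX (hBdisj b₄ hb₄ c₄ hc₄) (by rw [← hue]; exact hu0)
      have hb₄b : b₄ - b ∈ Set.range ⇑P := hBsub _ _ hb₄ hb
      have hdiff : u - b = (b₄ - b) + c₄ := by rw [hue]; abel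
      have hpos : 0 ≤ (b₄ - b) + c₄ := by
        rw [← hdiff]; exact sub_nonneg.2 hub
      have h1 : 0 ≤ b₄ - b := ud_pos hX (hBdisj _ hb₄b _ hc₄) hpos
      have m₁ := stepA b₄ hb₄ hb₄0
      have m₂ := stepA _ hb₄b h1
      have hfin := sub_mem_dComp hX m₁ m₂
      have hbb : b₄ - (b₄ - b) = b := by abel
      rwa [hbb] at hfin
    -- Step C : K ⊆ B'
    have stepC : (LinearMap.ker P : Set X) ⊆ dComp (Set.range ⇑P) := by
      intro k hk b hb
      exact hKdisj k hk b (stepB b hb)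
    -- Step D : B' ⊆ K
    have stepD : dComp (Set.range ⇑P) ⊆ (LinearMap.ker P : Set X) := by
      intro c hc
      have hPc : P c ∈ Set.range ⇑P := ⟨c, rfl⟩
      have hkK : c - P c ∈ (LinearMap.ker P : Set X) := by
        simp only [SetLike.mem_coe, LinearMap.mem_ker, map_sub]
        rw [← LinearMap.comp_apply, hP, sub_self]
      have d1 : UDisjoint c (P c) := hc (P c) hPc
      have d2 : UDisjoint (c - P c) (P c) := hKdisj _ hkK _ (stepB _ hPc)
      have d3 := ud_add hX d1 (ud_neg_left d2)
      have he : c + -(c - P c) = P c := by abel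
      rw [he] at d3
      have hz : P c = 0 := ud_self_eq_zero d3
      have : c - P c = c := by rw [hz, sub_zero]
      rwa [this] at hkK
    exact Set.Subset.antisymm stepC stepD
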